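/- Let u be an even vertex of the diamond D_n, and suppose some cone u + K_k (for some k ∈ {0,1,2,3}) contains no closed vertex of D_n. Then in Trap on the open subgraph of D_n (odd vertices may be closed; all even vertices open; moves outside D_n forbidden) starting from u, the first player (Odin) has a winning strategy: always move in the axis direction into that cone. -/

import Mathlib

variable {V : Type*}

/-- A move to `w` is legal from history `h` if `w` is adjacent to the current
vertex (the head of `h`), has not been visited, and is allowed. -/
def TrapLegal (G : SimpleGraph V) (A : Set V) (h : List V) (w : V) : Prop :=
  ∃ c, h.head? = some c ∧ G.Adj c w ∧ w ∉ h ∧ w ∈ A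

open Classical in
/-- The evolution of Trap when the first player uses strategy `σ` and the
second player uses strategy `τ`, starting from `v`; the first player moves at
histories of odd length.  If the strategy of the player to move chooses an
illegal move, the history freezes. -/
noncomputable def trapPlay (G : SimpleGraph V) (A : Set V) (σ τ : List V → V) (v : V) :
    ℕ → List V
  | 0 => [v]
  | n + 1 =>
    let h := trapPlay G A σ τ v n
    let w := if h.length % 2 = 1 then σ h else τ h
    if TrapLegal G A h w then w :: h else h

/-- The nearest-neighbour grid graph on `ℤ²`. -/
def gridGraph : SimpleGraph (ℤ × ℤ) where
  Adj u v := |u.1 - v.1| + |u.2 - v.2| = 1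
  symm := by
    constructor
    intro u v h
    simpa [abs_sub_comm] using h
  loopless := by
    constructor
    intro u h
    simp at h

/-- The diamond `D_n = {u ∈ ℤ² : ‖u‖₁ < 2n}`. -/
def diamond (n : ℕ) : Set (ℤ × ℤ) :=
  {u | |u.1| + |u.2| < 2 * n}

/-- The cones `K₀ = {(x,y) : |y| < x}` and its rotations by `πk/2`. -/
def coneK : Fin 4 → Set (ℤ × ℤ)
  | 0 => {u | |u.2| < u.1}
  | 1 => {u | |u.1| < u.2}
  | 2 => {u | |u.2| < -u.1}
  | 3 => {u | |u.1| < -u.2}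

/-- The axis direction pointing into the cone `K_k`. -/
def coneDir : Fin 4 → ℤ × ℤ
  | 0 => (1, 0)
  | 1 => (0, 1)
  | 2 => (-1, 0)
  | 3 => (0, -1)

namespace TrapAux

/-- Coordinate along the cone direction. -/
def sCo (u : ℤ × ℤ) (k : Fin 4) (v : ℤ × ℤ) : ℤ :=
  (v.1 - u.1) * (coneDir k).1 + (v.2 - u.2) * (coneDir k).2

/-- Coordinate perpendicular to the cone direction. -/
def tCo (u : ℤ × ℤ) (k : Fin 4) (v : ℤ × ℤ) : ℤ :=
  (v.1 - u.1) * (coneDir k).2 - (v.2 - u.2) * (coneDir k).1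

lemma cone_char (u : ℤ × ℤ) (k : Fin 4) (v : ℤ × ℤ) :
    v - u ∈ coneK k ↔ |tCo u k v| < sCo u k v := by
  fin_cases k <;>
    simp [coneK, coneDir, sCo, tCo, Prod.sub_def, Set.mem_setOf_eq] <;> ring_nf <;>
    simp [neg_add_eq_sub, abs_sub_comm]

lemma adj_st (u : ℤ × ℤ) (k : Fin 4) {a b : ℤ × ℤ} (h : gridGraph.Adj a b) :
    |sCo u k b - sCo u k a| + |tCo u k b - tCo u k a| = 1 := by
  have h' : |a.1 - b.1| + |a.2 - b.2| = 1 := h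
  fin_cases k <;> simp only [sCo, tCo, coneDir] <;> ring_nf <;>
    simp only [neg_add_eq_sub, abs_sub_comm a.1 b.1, abs_sub_comm a.2 b.2] at h' ⊢ <;>
    linarith

lemma adj_parity {a b : ℤ × ℤ} (h : gridGraph.Adj a b) :
    (Even (a.1 + a.2) ↔ Odd (b.1 + b.2)) := by
  have h' : |a.1 - b.1| + |a.2 - b.2| = 1 := h
  rcases abs_cases (a.1 - b.1) with ⟨h1, h2⟩ | ⟨h1, h2⟩ <;>
  rcases abs_cases (a.2 - b.2) with ⟨h3, h4⟩ | ⟨h3, h4⟩ <;>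
  · rw [Int.even_iff, Int.odd_iff]; omega

lemma sCo_add_dir (u : ℤ × ℤ) (k : Fin 4) (c : ℤ × ℤ) :
    sCo u k (c + coneDir k) = sCo u k c + 1 := by
  fin_cases k <;> simp [sCo, coneDir, Prod.fst_add, Prod.snd_add] <;> ring

lemma tCo_add_dir (u : ℤ × ℤ) (k : Fin 4) (c : ℤ × ℤ) :
    tCo u k (c + coneDir k) = tCo u k c := by
  fin_cases k <;> simp [tCo, coneDir, Prod.fst_add, Prod.snd_add] <;> ring

lemma sCo_self (u : ℤ × ℤ) (k : Fin 4) : sCo u k u = 0 := by simp [sCo]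

lemma tCo_self (u : ℤ × ℤ) (k : Fin 4) : tCo u k u = 0 := by simp [tCo]

lemma adj_dir (c : ℤ × ℤ) (k : Fin 4) : gridGraph.Adj c (c + coneDir k) := by
  show |c.1 - (c + coneDir k).1| + |c.2 - (c + coneDir k).2| = 1
  fin_cases k <;> simp [coneDir, Prod.fst_add, Prod.snd_add] <;> ring_nf <;> simp

lemma odd_add_dir (c : ℤ × ℤ) (k : Fin 4) (h : Even (c.1 + c.2)) :
    Odd ((c + coneDir k).1 + (c + coneDir k).2) := by
  rw [Int.even_iff] at h
  fin_cases k <;> simp [coneDir, Prod.fst_add, Prod.snd_add, Int.odd_iff] <;> omega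

lemma diamond_add_dir {n : ℕ} {c : ℤ × ℤ} (k : Fin 4)
    (hc : c ∈ diamond n) (he : Even (c.1 + c.2)) : c + coneDir k ∈ diamond n := by
  simp only [diamond, Set.mem_setOf_eq] at hc ⊢
  rw [Int.even_iff] at he
  have h1 : |c.1| + |c.2| ≤ 2 * (n : ℤ) - 2 := by
    rcases abs_cases c.1 with ⟨e1, _⟩ | ⟨e1, _⟩ <;>
    rcases abs_cases c.2 with ⟨e2, _⟩ | ⟨e2, _⟩ <;> omega
  have hd : |(coneDir k).1| + |(coneDir k).2| = 1 := by fin_cases k <;> simp [coneDir]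
  have h2 : |(c + coneDir k).1| ≤ |c.1| + |(coneDir k).1| := by
    simpa [Prod.fst_add] using abs_add_le c.1 (coneDir k).1
  have h3 : |(c + coneDir k).2| ≤ |c.2| + |(coneDir k).2| := by
    simpa [Prod.snd_add] using abs_add_le c.2 (coneDir k).2
  have := abs_nonneg (c + coneDir k).1
  linarith

/-- The invariant maintained along the play. -/
def Inv (n : ℕ) (u : ℤ × ℤ) (k : Fin 4) (h : List (ℤ × ℤ)) : Prop :=
  h ≠ [] ∧ h.Nodup ∧ (∀ v ∈ h, v ∈ diamond n) ∧
  (∀ l₁ w l₂, h = l₁ ++ w :: l₂ → Odd (w.1 + w.2) → l₂.head? = some (w - coneDir k)) ∧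
  (h.length % 2 = 1 → Even (h.headI.1 + h.headI.2) ∧ |tCo u k h.headI| ≤ sCo u k h.headI) ∧
  (h.length % 2 = 0 → Odd (h.headI.1 + h.headI.2) ∧ |tCo u k h.headI| < sCo u k h.headI)

lemma inv_base {n : ℕ} {u : ℤ × ℤ} (k : Fin 4) (hu : u ∈ diamond n)
    (hue : Even (u.1 + u.2)) : Inv n u k [u] := by
  refine ⟨by simp, by simp, by simpa using hu, ?_, ?_, by simp⟩
  · rintro l₁ w l₂ heq hodd
    exfalso
    have hw : w = u := by
      have : w ∈ [u] := heq ▸ (by simp : w ∈ l₁ ++ w :: l₂)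
      simpa using this
    subst hw
    exact (Int.not_odd_iff_even.mpr hue) hodd
  · intro _
    refine ⟨by simpa using hue, ?_⟩
    simp [sCo_self, tCo_self]

lemma odin_legal {n : ℕ} {closed : Set (ℤ × ℤ)} {u : ℤ × ℤ} {k : Fin 4}
    (hcone : ∀ w ∈ diamond n, w - u ∈ coneK k → w ∉ closed)
    {h : List (ℤ × ℤ)} (hI : Inv n u k h) (hodd : h.length % 2 = 1) :
    TrapLegal gridGraph (diamond n \ closed) h (h.headI + coneDir k) := by
  obtain ⟨hne, hnd, hdia, hstr, hoddinv, _⟩ := hI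
  obtain ⟨c, rest, rfl⟩ := List.exists_cons_of_ne_nil hne
  obtain ⟨hce, hct⟩ := hoddinv hodd
  simp only [List.headI] at hce hct ⊢
  have hcd : c ∈ diamond n := hdia c (by simp)
  have hwodd : Odd ((c + coneDir k).1 + (c + coneDir k).2) := odd_add_dir c k hce
  have hwdia : c + coneDir k ∈ diamond n := diamond_add_dir k hcd hce
  refine ⟨c, rfl, adj_dir c k, ?_, hwdia, ?_⟩
  · -- not visited
    intro hmem
    obtain ⟨l₁, l₂, heq⟩ := List.append_of_mem hmem
    have hhd := hstr l₁ (c + coneDir k) l₂ heq hwodd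
    rw [add_sub_cancel_right] at hhd
    obtain ⟨l₂', rfl⟩ : ∃ l₂', l₂ = c :: l₂' := by
      cases l₂ with
      | nil => simp at hhd
      | cons a t =>
        have : a = c := by simpa using hhd
        exact ⟨t, by rw [this]⟩
    cases l₁ with
    | nil =>
      have hcw : c = c + coneDir k := by simpa using congrArg List.headI heq
      rw [← hcw] at hwodd
      exact (Int.not_odd_iff_even.mpr hce) hwodd
    | cons a l₁' =>
      have heq' := heq
      simp only [List.cons_append, List.cons.injEq] at heq'
      obtain ⟨h1, hrest⟩ := heq'
      rw [List.nodup_cons] at hnd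
      exact hnd.1 (hrest ▸ (by simp : c ∈ l₁' ++ (c + coneDir k) :: c :: l₂'))
  · -- not closed
    apply hcone _ hwdia
    rw [cone_char, sCo_add_dir, tCo_add_dir]
    linarith

lemma inv_step {n : ℕ} {closed : Set (ℤ × ℤ)} {u : ℤ × ℤ} {k : Fin 4}
    {h : List (ℤ × ℤ)} {w : ℤ × ℤ}
    (hI : Inv n u k h)
    (hleg : TrapLegal gridGraph (diamond n \ closed) h w)
    (hσ : h.length % 2 = 1 → w = h.headI + coneDir k) :
    Inv n u k (w :: h) := by
  obtain ⟨hne, hnd, hdia, hstr, hoddi, heveni⟩ := hI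
  obtain ⟨c, rest, rfl⟩ := List.exists_cons_of_ne_nil hne
  obtain ⟨c', hc', hadj, hnm, hA⟩ := hleg
  have hcc : c = c' := by simpa using hc'
  subst hcc
  simp only [List.headI] at hσ hoddi heveni
  refine ⟨by simp, List.nodup_cons.mpr ⟨hnm, hnd⟩, ?_, ?_, ?_, ?_⟩
  · intro v hv
    rcases List.mem_cons.mp hv with rfl | hv
    · exact hA.1
    · exact hdia v hv
  · rintro l₁ w' l₂ heq hodd'
    cases l₁ with
    | nil =>
      simp only [List.nil_append, List.cons.injEq] at heq
      obtain ⟨rfl, rfl⟩ := heq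
      rcases Nat.mod_two_eq_zero_or_one (c :: rest).length with hpar | hpar
      · -- Eve just moved, so w' is even : contradiction with hodd'
        exfalso
        have hc_odd : Odd (c.1 + c.2) := (heveni hpar).1
        exact (Int.not_odd_iff_even.mpr ((adj_parity hadj).mpr hodd')) hc_odd
      · rw [hσ hpar, add_sub_cancel_right]
        rfl
    | cons a l₁' =>
      simp only [List.cons_append, List.cons.injEq] at heq
      exact hstr l₁' w' l₂ heq.2 hodd'
  · -- new length odd: w is an even vertex inside the closed cone
    intro hpar
    have hpar0 : (c :: rest).length % 2 = 0 := by
      simp only [List.length_cons] at hpar ⊢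
      omega
    obtain ⟨hc_odd, hct⟩ := heveni hpar0
    have hwe : Even (w.1 + w.2) := by
      by_contra hno
      have hwo : Odd (w.1 + w.2) := Int.not_even_iff_odd.mp hno
      exact (Int.not_odd_iff_even.mpr ((adj_parity hadj).mpr hwo)) hc_odd
    refine ⟨hwe, ?_⟩
    have hst := adj_st u k hadj
    have h1 : |tCo u k w| - |tCo u k c| ≤ |tCo u k w - tCo u k c| :=
      abs_sub_abs_le_abs_sub _ _
    have h2 : -(|sCo u k w - sCo u k c|) ≤ sCo u k w - sCo u k c := neg_abs_le _
    have hct' : |tCo u k c| + 1 ≤ sCo u k c := Int.add_one_le_iff.mpr hct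
    simp only [List.headI]
    linarith
  · -- new length even: w = c + coneDir k is odd, strictly inside the cone
    intro hpar
    have hpar1 : (c :: rest).length % 2 = 1 := by
      simp only [List.length_cons] at hpar ⊢
      omega
    obtain ⟨hc_even, hct⟩ := hoddi hpar1
    have hw := hσ hpar1
    subst hw
    refine ⟨odd_add_dir c k hc_even, ?_⟩
    simp only [List.headI]
    rw [sCo_add_dir, tCo_add_dir]
    linarith

end TrapAux

open TrapAux in
theorem odin_wins_from_unprotected
    (n : ℕ) (hn : 0 < n) (closed : Set (ℤ × ℤ))
    (hco : ∀ w ∈ closed, Odd (w.1 + w.2))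
    (u : ℤ × ℤ) (hu : u ∈ diamond n) (hue : Even (u.1 + u.2))
    (k : Fin 4) (hcone : ∀ w ∈ diamond n, w - u ∈ coneK k → w ∉ closed) :
    ∀ τ : List (ℤ × ℤ) → ℤ × ℤ, ∃ m : ℕ,
      (trapPlay gridGraph (diamond n \ closed)
          (fun h => h.headI + coneDir k) τ u m).length % 2 = 0 ∧
      ¬ TrapLegal gridGraph (diamond n \ closed)
          (trapPlay gridGraph (diamond n \ closed)
            (fun h => h.headI + coneDir k) τ u m)
          (τ (trapPlay gridGraph (diamond n \ closed)
            (fun h => h.headI + coneDir k) τ u m)) := by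
  intro τ
  classical
  set A : Set (ℤ × ℤ) := diamond n \ closed with hA
  set σ : List (ℤ × ℤ) → ℤ × ℤ := fun h => h.headI + coneDir k with hσ
  set P : ℕ → List (ℤ × ℤ) := trapPlay gridGraph A σ τ u with hPdef
  -- step case analysis
  have hstep : ∀ m : ℕ,
      (∃ w, ((P m).length % 2 = 1 ∧ w = σ (P m) ∨ (P m).length % 2 ≠ 1 ∧ w = τ (P m)) ∧
        ¬ TrapLegal gridGraph A (P m) w ∧ P (m + 1) = P m) ∨
      (∃ w, ((P m).length % 2 = 1 ∧ w = σ (P m) ∨ (P m).length % 2 ≠ 1 ∧ w = τ (P m)) ∧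
        TrapLegal gridGraph A (P m) w ∧ P (m + 1) = w :: P m) := by
    intro m
    rw [hPdef]
    show _ ∨ _
    rw [trapPlay]
    split
    case isTrue hodd =>
      split
      case isTrue hleg => exact Or.inr ⟨_, Or.inl ⟨hodd, rfl⟩, hleg, rfl⟩
      case isFalse hleg => exact Or.inl ⟨_, Or.inl ⟨hodd, rfl⟩, hleg, rfl⟩
    case isFalse hodd =>
      split
      case isTrue hleg => exact Or.inr ⟨_, Or.inr ⟨hodd, rfl⟩, hleg, rfl⟩
      case isFalse hleg => exact Or.inl ⟨_, Or.inr ⟨hodd, rfl⟩, hleg, rfl⟩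
  -- the invariant holds along the play
  have hInv : ∀ m, Inv n u k (P m) := by
    intro m
    induction m with
    | zero => exact inv_base k hu hue
    | succ m ih =>
      rcases hstep m with ⟨w, _, _, heq⟩ | ⟨w, hw, hleg, heq⟩
      · rw [heq]; exact ih
      · rw [heq]
        refine inv_step ih hleg ?_
        intro hodd
        rcases hw with ⟨_, rfl⟩ | ⟨hne, _⟩
        · rfl
        · exact absurd hodd hne
  -- bounding box
  set S : Finset (ℤ × ℤ) :=
    Finset.Icc ((-(2 * (n : ℤ)), -(2 * (n : ℤ)))) ((2 * (n : ℤ), 2 * (n : ℤ))) with hS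
  have hbound : ∀ m, (P m).length ≤ S.card := by
    intro m
    obtain ⟨_, hnd, hdia, _, _, _⟩ := hInv m
    have hsub : (P m).toFinset ⊆ S := by
      intro v hv
      have hvd := hdia v (List.mem_toFinset.mp hv)
      simp only [diamond, Set.mem_setOf_eq] at hvd
      rw [hS, Finset.mem_Icc]
      simp only [Prod.le_def]
      rcases abs_cases v.1 with ⟨e1, _⟩ | ⟨e1, _⟩ <;>
        rcases abs_cases v.2 with ⟨e2, _⟩ | ⟨e2, _⟩ <;> omega
    calc (P m).length = (P m).toFinset.card := (List.toFinset_card_of_nodup hnd).symm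
      _ ≤ S.card := Finset.card_le_card hsub
  -- if the game never got stuck at Eve's turn, it would run forever
  by_contra hcon
  push_neg at hcon
  have hgrow : ∀ m, (P m).length = m + 1 := by
    intro m
    induction m with
    | zero => rfl
    | succ m ih =>
      rcases hstep m with ⟨w, hw, hnl, heq⟩ | ⟨w, _, _, heq⟩
      · exfalso
        rcases hw with ⟨hodd, rfl⟩ | ⟨hne, rfl⟩
        · exact hnl (odin_legal hcone (hInv m) hodd)
        · have hpar : (P m).length % 2 = 0 := by omega
          exact hnl (hcon m hpar)
      · rw [heq, List.length_cons, ih]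
  have := hbound (S.card)
  rw [hgrow] at this
  omega
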